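/- Let B be a closed subset of [0,1] containing 0 and 1, and let f : B → ℝ be continuous and convex on B. Then the convex hull of the epigraph of f equals the epigraph of the affine extension L_B f: hull(epi(f)) = epi(L_B f), where epi(g) = {(t,y) : t in the domain of g, y ≥ g(t)}. -/

import Mathlib

open Set
open scoped Classical

/-- Closest left neighbor of `t` in `B`. -/
noncomputable def leftN (B : Set ℝ) (t : ℝ) : ℝ := sSup {u ∈ B | u ≤ t}

/-- Closest right neighbor of `t` in `B`. -/
noncomputable def rightN (B : Set ℝ) (t : ℝ) : ℝ := sInf {u ∈ B | t ≤ u}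

/-- The affine extension `L_B g` of a function `g` defined on `B` to `[0,1]`. -/
noncomputable def affExt (B : Set ℝ) (g : ℝ → ℝ) (t : ℝ) : ℝ :=
  if t ∈ B then g t
  else (1 - (t - leftN B t) / (rightN B t - leftN B t)) * g (leftN B t)
    + (t - leftN B t) / (rightN B t - leftN B t) * g (rightN B t)

/-- Epigraph of `f` restricted to a domain `A ⊆ ℝ`, as a subset of `ℝ²`. -/
def epiOn (A : Set ℝ) (f : ℝ → ℝ) : Set (ℝ × ℝ) := {p | p.1 ∈ A ∧ f p.1 ≤ p.2}

section Aux

variable {B : Set ℝ} {f : ℝ → ℝ}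

lemma leftN_mem (hBclosed : IsClosed B) (h0 : (0:ℝ) ∈ B) {t : ℝ} (ht : 0 ≤ t) :
    leftN B t ∈ B ∧ leftN B t ≤ t := by
  have hset : {u ∈ B | u ≤ t} = B ∩ Iic t := rfl
  have hcl : IsClosed {u ∈ B | u ≤ t} := by rw [hset]; exact hBclosed.inter isClosed_Iic
  have hne : {u ∈ B | u ≤ t}.Nonempty := ⟨0, h0, ht⟩
  have hbdd : BddAbove {u ∈ B | u ≤ t} := ⟨t, fun u hu => hu.2⟩
  have := hcl.csSup_mem hne hbdd
  exact ⟨this.1, this.2⟩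

lemma rightN_mem (hBclosed : IsClosed B) (h1 : (1:ℝ) ∈ B) {t : ℝ} (ht : t ≤ 1) :
    rightN B t ∈ B ∧ t ≤ rightN B t := by
  have hset : {u ∈ B | t ≤ u} = B ∩ Ici t := rfl
  have hcl : IsClosed {u ∈ B | t ≤ u} := by rw [hset]; exact hBclosed.inter isClosed_Ici
  have hne : {u ∈ B | t ≤ u}.Nonempty := ⟨1, h1, ht⟩
  have hbdd : BddBelow {u ∈ B | t ≤ u} := ⟨t, fun u hu => hu.2⟩
  have := hcl.csInf_mem hne hbdd
  exact ⟨this.1, this.2⟩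

lemma mem_le_leftN_or (h1 : (1:ℝ) ∈ B) {t s : ℝ} (ht : t ≤ 1) (hs : s ∈ B) :
    s ≤ leftN B t ∨ rightN B t ≤ s := by
  rcases le_or_gt s t with h | h
  · left
    exact le_csSup ⟨t, fun u hu => hu.2⟩ ⟨hs, h⟩
  · right
    exact csInf_le ⟨t, fun u hu => hu.2⟩ ⟨hs, h.le⟩

/-- The basic chord inequality implied by convexity on `B`. -/
lemma chordIneq
    (hconv : ∀ x ∈ B, ∀ y ∈ B, ∀ l ∈ Set.Icc (0:ℝ) 1, l * x + (1 - l) * y ∈ B →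
      f (l * x + (1 - l) * y) ≤ l * f x + (1 - l) * f y)
    {u v w : ℝ} (hu : u ∈ B) (hv : v ∈ B) (hw : w ∈ B)
    (huv : u < v) (hvw : v < w) :
    (w - u) * f v ≤ (w - v) * f u + (v - u) * f w := by
  have hwu : (0:ℝ) < w - u := by linarith
  have hwune : w - u ≠ 0 := ne_of_gt hwu
  set l : ℝ := (w - v) / (w - u) with hl
  have hl0 : 0 ≤ l := div_nonneg (by linarith) hwu.le
  have hl1 : l ≤ 1 := by rw [div_le_one hwu]; linarith
  have hlw : l * (w - u) = w - v := by rw [hl]; exact div_mul_cancel₀ _ hwune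
  have he : l * u + (1 - l) * w = v := by
    linear_combination (-1:ℝ) * hlw
  have h := hconv u hu w hw l ⟨hl0, hl1⟩ (by rw [he]; exact hv)
  rw [he] at h
  have h2 := mul_le_mul_of_nonneg_left h hwu.le
  have h3 : (w - u) * (l * f u + (1 - l) * f w) = (w - v) * f u + (v - u) * f w := by
    linear_combination (f u - f w) * hlw
  rw [h3] at h2
  linarith

/-- Separation: any point strictly below the affine extension can be separated from the
epigraph of `f` by a line lying below `f` on `B`. -/
lemma sepLine (hBsub : B ⊆ Set.Icc (0:ℝ) 1) (hBclosed : IsClosed B)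
    (h0 : (0:ℝ) ∈ B) (h1 : (1:ℝ) ∈ B) (hf : ContinuousOn f B)
    (hconv : ∀ x ∈ B, ∀ y ∈ B, ∀ l ∈ Set.Icc (0:ℝ) 1, l * x + (1 - l) * y ∈ B →
      f (l * x + (1 - l) * y) ≤ l * f x + (1 - l) * f y)
    {t : ℝ} (ht : t ∈ Set.Icc (0:ℝ) 1) {y : ℝ} (hy : y < affExt B f t) :
    ∃ α β : ℝ, (∀ s ∈ B, α * s + β ≤ f s) ∧ y < α * t + β := by
  have hcpt : IsCompact B := isCompact_Icc.of_isClosed_subset hBclosed hBsub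
  obtain ⟨x₀, hx₀B, hx₀⟩ := hcpt.exists_isMinOn ⟨0, h0⟩ hf
  have hMin : ∀ s ∈ B, f x₀ ≤ f s := fun s hs => hx₀ hs
  by_cases htB : t ∈ B
  · rw [affExt, if_pos htB] at hy
    -- three subcases: t = 0, t = 1, interior
    rcases eq_or_lt_of_le ht.1 with h0t | h0t
    · -- t = 0
      subst h0t
      set ε : ℝ := f 0 - y with hε
      have hεpos : 0 < ε := by simp [hε]; linarith
      have hcw : Filter.Tendsto f (nhdsWithin 0 B) (nhds (f 0)) := hf 0 htB
      obtain ⟨δ, hδpos, hδ⟩ := Metric.tendsto_nhdsWithin_nhds.mp hcw (ε/2) (by linarith)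
      refine ⟨min 0 ((f x₀ - (f 0 - ε/2))/δ), f 0 - ε/2, ?_, ?_⟩
      · intro s hs
        have hs01 := hBsub hs
        rcases lt_or_ge s δ with hsδ | hsδ
        · have hd : dist s 0 < δ := by
            rw [Real.dist_eq]
            rw [abs_of_nonneg (by linarith [hs01.1])]
            simpa using hsδ
          have := hδ hs hd
          rw [Real.dist_eq, abs_lt] at this
          have hαs : min 0 ((f x₀ - (f 0 - ε/2))/δ) * s ≤ 0 :=
            mul_nonpos_of_nonpos_of_nonneg (min_le_left _ _) hs01.1
          linarith
        · have hαδ : min 0 ((f x₀ - (f 0 - ε/2))/δ) * s ≤ min 0 ((f x₀ - (f 0 - ε/2))/δ) * δ := by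
            have := mul_nonpos_of_nonpos_of_nonneg (min_le_left 0 ((f x₀ - (f 0 - ε/2))/δ)) (by linarith : (0:ℝ) ≤ s - δ)
            nlinarith
          have h2 : min 0 ((f x₀ - (f 0 - ε/2))/δ) * δ ≤ (f x₀ - (f 0 - ε/2))/δ * δ :=
            mul_le_mul_of_nonneg_right (min_le_right _ _) hδpos.le
          rw [div_mul_cancel₀ _ (ne_of_gt hδpos)] at h2
          have := hMin s hs
          linarith
      · simp only [mul_zero, zero_add]
        linarith
    · rcases eq_or_lt_of_le ht.2 with h1t | h1t
      · -- t = 1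
        subst h1t
        set ε : ℝ := f 1 - y with hε
        have hεpos : 0 < ε := by simp [hε]; linarith
        have hcw : Filter.Tendsto f (nhdsWithin 1 B) (nhds (f 1)) := hf 1 htB
        obtain ⟨δ, hδpos, hδ⟩ := Metric.tendsto_nhdsWithin_nhds.mp hcw (ε/2) (by linarith)
        set α : ℝ := max 0 ((f 1 - ε/2 - f x₀)/δ) with hα
        refine ⟨α, f 1 - ε/2 - α, ?_, ?_⟩
        · intro s hs
          have hs01 := hBsub hs
          have hα0 : 0 ≤ α := le_max_left _ _
          rcases lt_or_ge (1 - s) δ with hsδ | hsδ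
          · have hd : dist s 1 < δ := by
              rw [Real.dist_eq, abs_of_nonpos (by linarith [hs01.2])]
              linarith
            have := hδ hs hd
            rw [Real.dist_eq, abs_lt] at this
            have : α * s ≤ α * 1 := mul_le_mul_of_nonneg_left hs01.2 hα0
            have h2 := hδ hs hd
            rw [Real.dist_eq, abs_lt] at h2
            linarith
          · have hαs : α * s ≤ α * (1 - δ) := mul_le_mul_of_nonneg_left (by linarith) hα0
            have h2 : (f 1 - ε/2 - f x₀)/δ ≤ α := le_max_right _ _
            have h3 : (f 1 - ε/2 - f x₀) ≤ α * δ := by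
              rw [div_le_iff₀ hδpos] at h2
              linarith
            have := hMin s hs
            nlinarith
        · have : α * 1 = α := mul_one α
          linarith
      · -- 0 < t < 1 : supporting line via sup of left slopes
        set L : Set ℝ := {r | ∃ s, s ∈ B ∧ s < t ∧ r = (f t - f s) / (t - s)} with hL
        have hkey : ∀ r ∈ L, ∀ v ∈ B, t < v → r ≤ (f v - f t) / (v - t) := by
          rintro r ⟨s, hsB, hst, rfl⟩ v hvB htv
          have hch := chordIneq hconv hsB htB hvB hst htv
          rw [div_le_div_iff₀ (by linarith) (by linarith)]
          nlinarith
        have hLne : L.Nonempty := ⟨(f t - f 0) / (t - 0), 0, h0, h0t, rfl⟩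
        have hbdd : BddAbove L := ⟨(f 1 - f t) / (1 - t), fun r hr => hkey r hr 1 h1 h1t⟩
        set m : ℝ := sSup L with hm
        refine ⟨m, f t - m * t, ?_, by linarith⟩
        intro s hs
        rcases lt_trichotomy s t with hst | hst | hst
        · have hle : (f t - f s) / (t - s) ≤ m := le_csSup hbdd ⟨s, hs, hst, rfl⟩
          rw [div_le_iff₀ (by linarith)] at hle
          nlinarith
        · subst hst; linarith
        · have hle : m ≤ (f s - f t) / (s - t) := csSup_le hLne fun r hr => hkey r hr s hs hst
          rw [le_div_iff₀ (by linarith)] at hle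
          nlinarith
  · -- t ∉ B : chord over the gap
    obtain ⟨haB, hat⟩ := leftN_mem hBclosed h0 ht.1
    obtain ⟨hbB, htb⟩ := rightN_mem hBclosed h1 ht.2
    set a : ℝ := leftN B t with ha
    set b : ℝ := rightN B t with hb
    have hat' : a < t := lt_of_le_of_ne hat (fun h => htB (h ▸ haB))
    have htb' : t < b := lt_of_le_of_ne htb (fun h => htB (h ▸ hbB))
    have hba : (0:ℝ) < b - a := by linarith
    have hkey2 : ∀ s ∈ B, (f b - f a) * (s - a) ≤ (f s - f a) * (b - a) := by
      intro s hs
      rcases mem_le_leftN_or h1 ht.2 hs with hsle | hsge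
      · rcases eq_or_lt_of_le hsle with h | h
        · have hsa : s = a := h.trans ha.symm
          subst hsa; nlinarith
        · have hch := chordIneq hconv hs haB hbB h (by linarith)
          nlinarith
      · rcases eq_or_lt_of_le hsge with h | h
        · have hsb : s = b := h.symm.trans hb.symm
          subst hsb; nlinarith
        · have hch := chordIneq hconv haB hbB hs (by linarith) h
          nlinarith
    refine ⟨(f b - f a) / (b - a), f a - (f b - f a) / (b - a) * a, ?_, ?_⟩
    · intro s hs
      have hgoal : (f b - f a) / (b - a) * (s - a) ≤ f s - f a := by
        rw [div_mul_eq_mul_div, div_le_iff₀ hba]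
        exact hkey2 s hs
      have h2 : (f b - f a) / (b - a) * s + (f a - (f b - f a) / (b - a) * a)
          = (f b - f a) / (b - a) * (s - a) + f a := by ring
      rw [h2]; linarith
    · have heq : (f b - f a) / (b - a) * t + (f a - (f b - f a) / (b - a) * a)
          = affExt B f t := by
        rw [affExt, if_neg htB, ← ha, ← hb]
        field_simp
        ring
      linarith [heq ▸ hy]

lemma halfplane_convex (α β : ℝ) : Convex ℝ {p : ℝ × ℝ | α * p.1 + β ≤ p.2} := by
  intro p hp q hq u v hu hv huv
  simp only [Set.mem_setOf_eq] at *
  simp only [Prod.fst_add, Prod.snd_add, Prod.smul_fst, Prod.smul_snd, smul_eq_mul]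
  have hβ : u * β + v * β = β := by rw [← add_mul, huv, one_mul]
  nlinarith [mul_le_mul_of_nonneg_left hp hu, mul_le_mul_of_nonneg_left hq hv]

end Aux

/-- for `f` continuous and convex on `B`, the convex hull of the epigraph of `f`
equals the epigraph of the affine extension `L_B f`. -/
theorem stmt7 (B : Set ℝ) (hBsub : B ⊆ Set.Icc (0:ℝ) 1) (hBclosed : IsClosed B)
    (h0 : (0:ℝ) ∈ B) (h1 : (1:ℝ) ∈ B)
    (f : ℝ → ℝ) (hf : ContinuousOn f B)
    (hconv : ∀ x ∈ B, ∀ y ∈ B, ∀ l ∈ Set.Icc (0:ℝ) 1, l * x + (1 - l) * y ∈ B →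
      f (l * x + (1 - l) * y) ≤ l * f x + (1 - l) * f y) :
    convexHull ℝ (epiOn B f) = epiOn (Set.Icc (0:ℝ) 1) (affExt B f) := by
  apply Set.Subset.antisymm
  · -- hull ⊆ epigraph of affExt
    intro p hp
    have hIcc : p.1 ∈ Set.Icc (0:ℝ) 1 := by
      have hsub : epiOn B f ⊆ (Set.Icc (0:ℝ) 1) ×ˢ (Set.univ : Set ℝ) := by
        intro q hq
        exact ⟨hBsub hq.1, Set.mem_univ _⟩
      have := convexHull_min hsub ((convex_Icc (0:ℝ) 1).prod convex_univ) hp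
      exact this.1
    refine ⟨hIcc, ?_⟩
    by_contra hcon
    push_neg at hcon
    obtain ⟨α, β, hbelow, hsep⟩ := sepLine hBsub hBclosed h0 h1 hf hconv hIcc hcon
    have hsub2 : epiOn B f ⊆ {q : ℝ × ℝ | α * q.1 + β ≤ q.2} := by
      intro q hq
      exact le_trans (hbelow q.1 hq.1) hq.2
    have := convexHull_min hsub2 (halfplane_convex α β) hp
    simp only [Set.mem_setOf_eq] at this
    linarith
  · -- epigraph of affExt ⊆ hull
    rintro ⟨t, y⟩ ⟨htIcc, hty⟩
    by_cases htB : t ∈ B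
    · apply subset_convexHull ℝ (epiOn B f)
      refine ⟨htB, ?_⟩
      rwa [affExt, if_pos htB] at hty
    · obtain ⟨haB, hat⟩ := leftN_mem hBclosed h0 htIcc.1
      obtain ⟨hbB, htb⟩ := rightN_mem hBclosed h1 htIcc.2
      set a : ℝ := leftN B t with ha
      set b : ℝ := rightN B t with hb
      have hat' : a < t := lt_of_le_of_ne hat (fun h => htB (h ▸ haB))
      have htb' : t < b := lt_of_le_of_ne htb (fun h => htB (h ▸ hbB))
      have hba : (0:ℝ) < b - a := by linarith
      set r : ℝ := (t - a) / (b - a) with hr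
      have hr0 : 0 ≤ r := div_nonneg (by linarith) hba.le
      have hr1 : r ≤ 1 := by rw [div_le_one hba]; linarith
      have hval : affExt B f t = (1 - r) * f a + r * f b := by
        rw [affExt, if_neg htB]
      set d : ℝ := y - affExt B f t with hd
      have hd0 : 0 ≤ d := by linarith
      have hcomb : ((t, y) : ℝ × ℝ)
          = (1 - r) • ((a, f a + d) : ℝ × ℝ) + r • ((b, f b + d) : ℝ × ℝ) := by
        have hfst : t = (1 - r) * a + r * b := by
          have hrb : r * (b - a) = t - a := by rw [hr]; exact div_mul_cancel₀ _ hba.ne'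
          linear_combination (-1:ℝ) * hrb
        have hsnd : y = (1 - r) * (f a + d) + r * (f b + d) := by
          have : y = affExt B f t + d := by rw [hd]; ring
          rw [this, hval]; ring
        rw [Prod.ext_iff]
        constructor
        · simpa using hfst
        · simpa using hsnd
      rw [hcomb]
      exact (convex_convexHull ℝ (epiOn B f))
        (subset_convexHull ℝ _ ⟨haB, show f a ≤ f a + d by linarith⟩)
        (subset_convexHull ℝ _ ⟨hbB, show f b ≤ f b + d by linarith⟩)
        (by linarith) hr0 (by ring)
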